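/- When a firm's capacity is greater than or equal to its peak, the firm cannot strictly improve its outcome under any stable matching algorithm by increasing its capacity: for any capacity b > c_f ≥ p_f and any stable matching μ' of the instance with capacity b, the firm's match μ'(f) is weakly worse for f than its match under the original instance's chosen stable matching when that matching is the firm-optimal one, and in fact μ'(f) equals the firm's worker-optimal match at peak. -/

import Mathlib

/-- A many-to-one matching instance: firms `F` with capacities, workers `W`,
strict preferences of workers over `Option F` (`none` = unmatched), strict
preferences of firms over individual workers (`Option W`, `none` = keeping a
seat empty) together with a responsive extension to sets of workers. -/
structure MTO (F W : Type) [DecidableEq W] where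
  cap : F → ℕ
  /-- `wlt w a b` : worker `w` strictly prefers `a` to `b`. -/
  wlt : W → Option F → Option F → Prop
  wlt_trans : ∀ w a b c, wlt w a b → wlt w b c → wlt w a c
  wlt_irrefl : ∀ w a, ¬ wlt w a a
  wlt_trichot : ∀ w a b, a = b ∨ wlt w a b ∨ wlt w b a
  /-- `flt1 f a b` : firm `f` strictly prefers (single) worker option `a` to `b`. -/
  flt1 : F → Option W → Option W → Prop
  flt1_trans : ∀ f a b c, flt1 f a b → flt1 f b c → flt1 f a c
  flt1_irrefl : ∀ f a, ¬ flt1 f a a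
  flt1_trichot : ∀ f a b, a = b ∨ flt1 f a b ∨ flt1 f b a
  /-- `flt f S T` : firm `f` strictly prefers the set `S` to the set `T`
  (responsive extension of `flt1`). -/
  flt : F → Finset W → Finset W → Prop
  flt_trans : ∀ f S T U, flt f S T → flt f T U → flt f S U
  flt_irrefl : ∀ f S, ¬ flt f S S
  resp_add : ∀ f (S : Finset W) (w : W), w ∉ S →
    (flt f (insert w S) S ↔ flt1 f (some w) none)
  resp_swap : ∀ f (S : Finset W) (w w' : W), w ∉ S → w' ∉ S → w ≠ w' →
    (flt f (insert w S) (insert w' S) ↔ flt1 f (some w) (some w'))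

variable {F W : Type} [DecidableEq W] [DecidableEq F] [Fintype W]

/-- The set of workers matched to firm `f` under the matching `μ`. -/
def matchedSet (μ : W → Option F) (f : F) : Finset W :=
  Finset.univ.filter (fun w => μ w = some f)

/-- `μ` respects all capacity constraints. -/
def MTO.isMatching (I : MTO F W) (μ : W → Option F) : Prop :=
  ∀ f, (matchedSet μ f).card ≤ I.cap f

/-- No agent is matched to an unacceptable partner. -/
def MTO.indivRational (I : MTO F W) (μ : W → Option F) : Prop :=
  (∀ w f, μ w = some f → ¬ I.wlt w none (some f)) ∧
  (∀ w f, μ w = some f → ¬ I.flt1 f none (some w))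

/-- The worker-firm pair `(w, f)` blocks `μ`. -/
def MTO.blocks (I : MTO F W) (μ : W → Option F) (w : W) (f : F) : Prop :=
  I.wlt w (some f) (μ w) ∧
  ∃ S ⊆ matchedSet μ f, (insert w S).card ≤ I.cap f ∧
    I.flt f (insert w S) (matchedSet μ f)

/-- Stability: a feasible, individually rational matching with no blocking pair. -/
def MTO.isStable (I : MTO F W) (μ : W → Option F) : Prop :=
  I.isMatching μ ∧ I.indivRational μ ∧ ∀ w f, ¬ I.blocks μ w f

/-- `μ` is the worker-optimal stable matching (output of WPDA). -/
def MTO.workerOptimal (I : MTO F W) (μ : W → Option F) : Prop :=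
  I.isStable μ ∧ ∀ μ', I.isStable μ' → ∀ w, μ' w = μ w ∨ I.wlt w (μ w) (μ' w)

/-- `μ` is the firm-optimal stable matching (output of FPDA). -/
def MTO.firmOptimal (I : MTO F W) (μ : W → Option F) : Prop :=
  I.isStable μ ∧ ∀ μ', I.isStable μ' → ∀ f,
    matchedSet μ' f = matchedSet μ f ∨ I.flt f (matchedSet μ f) (matchedSet μ' f)

/-- The instance obtained from `I` by setting the capacity of firm `f` to `b`. -/
def MTO.withCap (I : MTO F W) (f : F) (b : ℕ) : MTO F W :=
  { I with cap := Function.update I.cap f b }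

/-- The peak of firm `f`: the largest number of workers matched to `f` in any
stable matching for any choice of `f`'s capacity. -/
noncomputable def MTO.peak (I : MTO F W) (f : F) : ℕ :=
  sSup {n | ∃ b μ, (I.withCap f b).isStable μ ∧ (matchedSet μ f).card = n}

/-- `w` proposes to `f` at some point of WPDA, where `μ` is the worker-optimal
stable matching (i.e. the WPDA outcome): `w` finds `f` acceptable and `f` is
weakly preferred by `w` to its final WPDA match. -/
def MTO.proposesTo (I : MTO F W) (μ : W → Option F) (w : W) (f : F) : Prop :=
  I.wlt w (some f) none ∧ (μ w = some f ∨ I.wlt w (some f) (μ w))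

/-- All workers in `S` are acceptable to `f`. -/
def MTO.acceptableSet (I : MTO F W) (f : F) (S : Finset W) : Prop :=
  ∀ w ∈ S, ¬ I.flt1 f none (some w)

/-- Strongly monotone preferences: any larger acceptable set is strictly
preferred to any smaller acceptable set. -/
def MTO.stronglyMonotone (I : MTO F W) (f : F) : Prop :=
  ∀ S T : Finset W, I.acceptableSet f S → I.acceptableSet f T →
    T.card < S.card → I.flt f S T

lemma mem_matchedSet_iff {μ : W → Option F} {g : F} {w : W} :
    w ∈ matchedSet μ g ↔ μ w = some g := by
  simp [matchedSet]

lemma MTO.flt1_some_none (I : MTO F W) {g : F} {w : W}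
    (h : ¬ I.flt1 g none (some w)) : I.flt1 g (some w) none := by
  rcases I.flt1_trichot g (some w) none with h1 | h1 | h1
  · exact absurd h1 (by simp)
  · exact h1
  · exact absurd h1 h

/-- Stability transfers to a smaller capacity of `f`, provided the matching
still fits. -/
lemma stable_cap_mono (I : MTO F W) (f : F) {b c : ℕ} {μ : W → Option F}
    (h : (I.withCap f b).isStable μ) (hc : (matchedSet μ f).card ≤ c) (hcb : c ≤ b) :
    (I.withCap f c).isStable μ := by
  refine ⟨?_, h.2.1, ?_⟩
  · intro g
    by_cases hg : g = f
    · subst hg; simpa [MTO.withCap] using hc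
    · have := h.1 g
      simpa [MTO.withCap, Function.update_of_ne hg] using this
  · intro w g hblk
    apply h.2.2 w g
    obtain ⟨hw, S, hS, hcard, hflt⟩ := hblk
    refine ⟨hw, S, hS, le_trans hcard ?_, hflt⟩
    by_cases hg : g = f
    · subst hg; simpa [MTO.withCap] using hcb
    · simp [MTO.withCap, Function.update_of_ne hg]

/-- Stability transfers back to the original instance. -/
lemma stable_orig (I : MTO F W) (f : F) {b : ℕ} {μ : W → Option F}
    (h : (I.withCap f b).isStable μ) (hc : (matchedSet μ f).card ≤ I.cap f)
    (hcb : I.cap f ≤ b) : I.isStable μ := by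
  refine ⟨?_, h.2.1, ?_⟩
  · intro g
    by_cases hg : g = f
    · subst hg; exact hc
    · have := h.1 g
      simpa [MTO.withCap, Function.update_of_ne hg] using this
  · intro w g hblk
    apply h.2.2 w g
    obtain ⟨hw, S, hS, hcard, hflt⟩ := hblk
    refine ⟨hw, S, hS, le_trans hcard ?_, hflt⟩
    by_cases hg : g = f
    · subst hg; simpa [MTO.withCap] using hcb
    · simp [MTO.withCap, Function.update_of_ne hg]

/-- At or above peak, increasing capacity cannot improve the firm under any
stable matching algorithm: for any capacity `b > c_f ≥ p_f` and any stable
matching of the enlarged instance, the firm's match equals its worker-optimal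
match at peak, and is weakly worse than its firm-optimal match in the original
instance. -/
theorem add_capacity_useless_at_or_above_peak
    {F W : Type} [DecidableEq W] [DecidableEq F] [Fintype W]
    (I : MTO F W) (f : F) (hpeak : I.peak f ≤ I.cap f)
    (b : ℕ) (hb : I.cap f < b)
    (μ' : W → Option F) (hμ' : (I.withCap f b).isStable μ')
    (μF : W → Option F) (hF : I.firmOptimal μF)
    (μpk : W → Option F) (hpk : (I.withCap f (I.peak f)).workerOptimal μpk) :
    matchedSet μ' f = matchedSet μpk f ∧
    (matchedSet μ' f = matchedSet μF f ∨
      I.flt f (matchedSet μF f) (matchedSet μ' f)) := by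
  classical
  -- the size of f's match in μ' is at most the peak
  have hM'peak : (matchedSet μ' f).card ≤ I.peak f := by
    apply le_csSup
    · refine ⟨Fintype.card W, ?_⟩
      rintro n ⟨b', μ'', _, rfl⟩
      exact le_trans (Finset.card_filter_le _ _) (le_of_eq (Finset.card_univ))
    · exact ⟨b, μ', hμ', rfl⟩
  have hpb : I.peak f ≤ b := le_of_lt (lt_of_le_of_lt hpeak hb)
  -- μ' is stable in the at-peak instance and in the original instance
  have hJ : (I.withCap f (I.peak f)).isStable μ' := stable_cap_mono I f hμ' hM'peak hpb
  have hIμ' : I.isStable μ' := stable_orig I f hμ' (hM'peak.trans hpeak) (le_of_lt hb)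
  have hpkstable : (I.withCap f (I.peak f)).isStable μpk := hpk.1
  -- all workers weakly prefer μpk to μ'
  have hwpref : ∀ w, μ' w = μpk w ∨ I.wlt w (μpk w) (μ' w) := fun w => hpk.2 μ' hJ w
  -- acceptability of matched workers
  have hacc : ∀ (g : F) (w : W), μpk w = some g → I.flt1 g (some w) none := fun g w hw =>
    I.flt1_some_none (hpkstable.2.1.2 w g hw)
  -- Step 1 : matchedSet μpk f ⊆ matchedSet μ' f (uses b > peak)
  have hsub : matchedSet μpk f ⊆ matchedSet μ' f := by
    intro w hw
    rw [mem_matchedSet_iff] at hw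
    rw [mem_matchedSet_iff]
    by_contra hw'
    have hlt : I.wlt w (some f) (μ' w) := by
      rcases hwpref w with h | h
      · exact absurd (h.trans hw) hw'
      · rwa [hw] at h
    apply hμ'.2.2 w f
    refine ⟨hlt, matchedSet μ' f, Finset.Subset.refl _, ?_, ?_⟩
    · have h1 : (insert w (matchedSet μ' f)).card ≤ (matchedSet μ' f).card + 1 :=
        Finset.card_insert_le _ _
      have h2 : (matchedSet μ' f).card + 1 ≤ b :=
        Nat.succ_le_of_lt (lt_of_le_of_lt (hM'peak.trans hpeak) hb)
      simpa [MTO.withCap] using le_trans h1 h2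
    · exact (I.resp_add f _ w (by simpa [mem_matchedSet_iff] using hw')).mpr (hacc f w hw)
  -- Step 2 : fiberwise counting over the finite set of used match-values
  set t : Finset (Option F) := Finset.univ.image μ' ∪ Finset.univ.image μpk with ht
  have h1 : (Finset.univ : Finset W).card
      = ∑ o ∈ t, (Finset.univ.filter (fun w => μ' w = o)).card :=
    Finset.card_eq_sum_card_fiberwise (fun w _ =>
      Finset.mem_union_left _ (Finset.mem_image_of_mem _ (Finset.mem_univ w)))
  have h2 : (Finset.univ : Finset W).card
      = ∑ o ∈ t, (Finset.univ.filter (fun w => μpk w = o)).card :=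
    Finset.card_eq_sum_card_fiberwise (fun w _ =>
      Finset.mem_union_right _ (Finset.mem_image_of_mem _ (Finset.mem_univ w)))
  -- every worker matched under μ' is matched under μpk
  have hmatched : ∀ w : W, μpk w = none → μ' w = none := by
    intro w hwn
    by_contra hne
    obtain ⟨g, hg⟩ := Option.ne_none_iff_exists'.mp hne
    rcases hwpref w with h | h
    · rw [hwn] at h; rw [h] at hg; exact Option.some_ne_none g hg.symm
    · rw [hwn, hg] at h
      exact hJ.2.1.1 w g hg h
  -- fiberwise inequality
  have hfle : ∀ o ∈ t, (Finset.univ.filter (fun w => μpk w = o)).card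
      ≤ (Finset.univ.filter (fun w => μ' w = o)).card := by
    intro o _
    match o with
    | none =>
      apply Finset.card_le_card
      intro w hw
      simp only [Finset.mem_filter, Finset.mem_univ, true_and] at hw ⊢
      exact hmatched w hw
    | some g =>
      by_contra hcon
      push_neg at hcon
      have hne : ¬ matchedSet μpk g ⊆ matchedSet μ' g := fun hss =>
        absurd (Finset.card_le_card hss) (not_le.mpr hcon)
      obtain ⟨w, hw1, hw2⟩ := Finset.not_subset.mp hne
      rw [mem_matchedSet_iff] at hw1
      have hlt : I.wlt w (some g) (μ' w) := by
        rcases hwpref w with h | h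
        · exact absurd (mem_matchedSet_iff.mpr (h.trans hw1)) hw2
        · rwa [hw1] at h
      apply hJ.2.2 w g
      refine ⟨hlt, matchedSet μ' g, Finset.Subset.refl _, ?_, ?_⟩
      · have ha : (insert w (matchedSet μ' g)).card ≤ (matchedSet μ' g).card + 1 :=
          Finset.card_insert_le _ _
        have hbnd : (matchedSet μ' g).card + 1 ≤ (matchedSet μpk g).card :=
          Nat.succ_le_of_lt hcon
        exact le_trans ha (le_trans hbnd (hpkstable.1 g))
      · exact (I.resp_add g _ w (by simpa [mem_matchedSet_iff] using hw2)).mpr (hacc g w hw1)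
  -- equality of each fiber's cardinality
  have hsum : ∑ o ∈ t, (Finset.univ.filter (fun w => μpk w = o)).card
      = ∑ o ∈ t, (Finset.univ.filter (fun w => μ' w = o)).card := by
    rw [← h1, ← h2]
  have hfeq : ∀ o ∈ t, (Finset.univ.filter (fun w => μpk w = o)).card
      = (Finset.univ.filter (fun w => μ' w = o)).card :=
    (Finset.sum_eq_sum_iff_of_le hfle).mp hsum
  -- conclude card equality for f
  have hcards : (matchedSet μpk f).card = (matchedSet μ' f).card := by
    by_cases hf : some f ∈ t
    · exact hfeq _ hf
    · have e1 : matchedSet μpk f = ∅ := by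
        apply Finset.eq_empty_of_forall_notMem
        intro w hw
        exact hf (Finset.mem_union_right _
          (Finset.mem_image.mpr ⟨w, Finset.mem_univ w, mem_matchedSet_iff.mp hw⟩))
      have e2 : matchedSet μ' f = ∅ := by
        apply Finset.eq_empty_of_forall_notMem
        intro w hw
        exact hf (Finset.mem_union_left _
          (Finset.mem_image.mpr ⟨w, Finset.mem_univ w, mem_matchedSet_iff.mp hw⟩))
      rw [e1, e2]
  have hMeq : matchedSet μ' f = matchedSet μpk f :=
    (Finset.eq_of_subset_of_card_le hsub (le_of_eq hcards.symm)).symm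
  exact ⟨hMeq, hF.2 μ' hIμ' f⟩
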